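/- Let g ∈ ℝ³, k > 0, and let x(t) ∈ ℝ^m be a bounded (measurable) input with Π(t) ∈ ℝ^{3×m} satisfying ‖Π(t)‖_F ≤ √2 k ‖g‖² for all t. Along solutions of ğ̇ = k(ğ × g) × ğ − [ğ]_× Π(t)x on 𝕊²_g, the function L₁ = ½‖g − ğ‖² satisfies the differential inequality L̇₁ ≤ −2k‖g‖² L₁ + c₁ + c₂‖x‖ for suitable constants c₁, c₂ ≥ 0 depending only on k and ‖g‖. -/

import Mathlib

open Matrix

def skew (x : Fin 3 → ℝ) : Matrix (Fin 3) (Fin 3) ℝ :=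
  !![0, -x 2, x 1; x 2, 0, -x 0; -x 1, x 0, 0]

def cross (u v : Fin 3 → ℝ) : Fin 3 → ℝ := (skew u).mulVec v

lemma aux_expand (g a w : Fin 3 → ℝ) (k : ℝ) :
    -((g - a) ⬝ᵥ (k • cross (cross a g) a - (skew a).mulVec w))
      = -(k * ((a ⬝ᵥ a) * (g ⬝ᵥ g) - (g ⬝ᵥ a) ^ 2)) + g ⬝ᵥ (skew a).mulVec w := by
  simp [cross, skew, Matrix.mulVec, dotProduct, Fin.sum_univ_three]
  ring

lemma aux_lag (a w : Fin 3 → ℝ) :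
    ((skew a).mulVec w) ⬝ᵥ ((skew a).mulVec w) = (a ⬝ᵥ a) * (w ⬝ᵥ w) - (a ⬝ᵥ w) ^ 2 := by
  simp [skew, Matrix.mulVec, dotProduct, Fin.sum_univ_three]
  ring

lemma aux_exp (g a : Fin 3 → ℝ) :
    (g - a) ⬝ᵥ (g - a) = g ⬝ᵥ g - 2 * (g ⬝ᵥ a) + a ⬝ᵥ a := by
  simp [dotProduct, Fin.sum_univ_three]
  ring

lemma aux_cs (u v : Fin 3 → ℝ) : (u ⬝ᵥ v) ^ 2 ≤ (u ⬝ᵥ u) * (v ⬝ᵥ v) := by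
  have h := Finset.sum_mul_sq_le_sq_mul_sq Finset.univ u v
  simpa [dotProduct, sq] using h

lemma aux_dot_nonneg {n : ℕ} (u : Fin n → ℝ) : 0 ≤ u ⬝ᵥ u :=
  Finset.sum_nonneg fun i _ => mul_self_nonneg _

lemma aux_deriv (g : Fin 3 → ℝ) (γ : ℝ → Fin 3 → ℝ) (d : Fin 3 → ℝ) (t : ℝ)
    (h : HasDerivAt γ d t) :
    HasDerivAt (fun s => (1 / 2 : ℝ) * ((g - γ s) ⬝ᵥ (g - γ s))) (-((g - γ t) ⬝ᵥ d)) t := by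
  have hcomp := hasDerivAt_pi.1 h
  have e : ∀ i : Fin 3, HasDerivAt (fun s => (g i - γ s i) * (g i - γ s i))
      ((0 - d i) * (g i - γ t i) + (g i - γ t i) * (0 - d i)) t := fun i =>
    ((hasDerivAt_const t (g i)).sub (hcomp i)).mul ((hasDerivAt_const t (g i)).sub (hcomp i))
  have hsum := (((e 0).add (e 1)).add (e 2)).const_mul (1 / 2 : ℝ)
  convert hsum using 1
  · rfl
  · rfl
  · funext s
    simp only [dotProduct, Fin.sum_univ_three, Pi.sub_apply, Pi.add_apply]
  · simp only [dotProduct, Fin.sum_univ_three, Pi.sub_apply]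
    ring

lemma aux_rowbound {m : ℕ} (P : Matrix (Fin 3) (Fin m) ℝ) (x : Fin m → ℝ) :
    (P.mulVec x) ⬝ᵥ (P.mulVec x) ≤ (∑ i, ∑ j, (P i j) ^ 2) * (x ⬝ᵥ x) := by
  have hrow : ∀ i : Fin 3, (P.mulVec x i) ^ 2 ≤ (∑ j, (P i j) ^ 2) * (x ⬝ᵥ x) := by
    intro i
    have h := Finset.sum_mul_sq_le_sq_mul_sq Finset.univ (P i) x
    simpa [Matrix.mulVec, dotProduct, sq] using h
  calc (P.mulVec x) ⬝ᵥ (P.mulVec x) = ∑ i, (P.mulVec x i) ^ 2 := by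
        simp [dotProduct, sq]
    _ ≤ ∑ i, (∑ j, (P i j) ^ 2) * (x ⬝ᵥ x) := Finset.sum_le_sum fun i _ => hrow i
    _ = (∑ i, ∑ j, (P i j) ^ 2) * (x ⬝ᵥ x) := by rw [Finset.sum_mul]

/-- Along ğ̇ = k(ğ × g) × ğ − [ğ]_× Π(t) x(t) on 𝕊²_g, with ‖Π(t)‖_F ≤ √2 k ‖g‖²,
the function L₁ = ½‖g − ğ‖² satisfies L̇₁ ≤ −2k‖g‖² L₁ + c₁ + c₂‖x‖ for suitable
constants c₁, c₂ ≥ 0 depending only on k and ‖g‖. -/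
theorem stmt17 (g : Fin 3 → ℝ) (k : ℝ) (hk : 0 < k) (m : ℕ) :
    ∃ c₁ c₂ : ℝ, 0 ≤ c₁ ∧ 0 ≤ c₂ ∧
      ∀ (P : ℝ → Matrix (Fin 3) (Fin m) ℝ) (x : ℝ → Fin m → ℝ) (γ : ℝ → Fin 3 → ℝ),
        (∀ t, Real.sqrt (∑ i, ∑ j, (P t i j) ^ 2) ≤ Real.sqrt 2 * k * (g ⬝ᵥ g)) →
        (∀ t, γ t ⬝ᵥ γ t = g ⬝ᵥ g) →
        (∀ t, HasDerivAt γ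
          (k • cross (cross (γ t) g) (γ t) - ((skew (γ t)) * P t).mulVec (x t)) t) →
        ∀ t, deriv (fun s => (1 / 2) * ((g - γ s) ⬝ᵥ (g - γ s))) t ≤
          -(2 * k * (g ⬝ᵥ g)) * ((1 / 2) * ((g - γ t) ⬝ᵥ (g - γ t)))
            + c₁ + c₂ * Real.sqrt (x t ⬝ᵥ x t) := by
  have hG0 : 0 ≤ g ⬝ᵥ g := aux_dot_nonneg g
  refine ⟨4 * k * (g ⬝ᵥ g) ^ 2, Real.sqrt 2 * k * (g ⬝ᵥ g) ^ 2, by positivity, by positivity,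
    ?_⟩
  intro P x γ hP hγ hd t
  have hdw : ((skew (γ t)) * P t).mulVec (x t) = (skew (γ t)).mulVec ((P t).mulVec (x t)) := by
    rw [Matrix.mulVec_mulVec]
  have hL := aux_deriv g γ _ t (hd t)
  rw [hL.deriv, hdw, aux_expand, aux_exp, hγ t]
  -- abbreviate
  obtain ⟨w, hw⟩ : ∃ w, w = (P t).mulVec (x t) := ⟨_, rfl⟩
  rw [← hw]
  obtain ⟨T, hT⟩ : ∃ T, T = g ⬝ᵥ (skew (γ t)).mulVec w := ⟨_, rfl⟩
  rw [← hT]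
  -- bound on the perturbation term
  have hx0 : 0 ≤ x t ⬝ᵥ x t := aux_dot_nonneg (x t)
  have hX0 : 0 ≤ Real.sqrt (x t ⬝ᵥ x t) := Real.sqrt_nonneg _
  have hX2 : (Real.sqrt (x t ⬝ᵥ x t)) ^ 2 = x t ⬝ᵥ x t := Real.sq_sqrt hx0
  have hPsum0 : 0 ≤ ∑ i, ∑ j, (P t i j) ^ 2 :=
    Finset.sum_nonneg fun i _ => Finset.sum_nonneg fun j _ => sq_nonneg _
  have hPb : (∑ i, ∑ j, (P t i j) ^ 2) ≤ 2 * k ^ 2 * (g ⬝ᵥ g) ^ 2 := by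
    have h := hP t
    have h1 : (Real.sqrt (∑ i, ∑ j, (P t i j) ^ 2)) ^ 2 = ∑ i, ∑ j, (P t i j) ^ 2 :=
      Real.sq_sqrt hPsum0
    have h2 : (Real.sqrt 2) ^ 2 = 2 := Real.sq_sqrt (by norm_num)
    nlinarith [Real.sqrt_nonneg (∑ i, ∑ j, (P t i j) ^ 2), Real.sqrt_nonneg 2,
      mul_nonneg (mul_nonneg (Real.sqrt_nonneg 2) hk.le) hG0]
  have hww : w ⬝ᵥ w ≤ 2 * k ^ 2 * (g ⬝ᵥ g) ^ 2 * (x t ⬝ᵥ x t) := by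
    rw [hw]
    calc (P t).mulVec (x t) ⬝ᵥ (P t).mulVec (x t)
        ≤ (∑ i, ∑ j, (P t i j) ^ 2) * (x t ⬝ᵥ x t) := aux_rowbound (P t) (x t)
      _ ≤ 2 * k ^ 2 * (g ⬝ᵥ g) ^ 2 * (x t ⬝ᵥ x t) := mul_le_mul_of_nonneg_right hPb hx0
  have hw0 : 0 ≤ w ⬝ᵥ w := aux_dot_nonneg w
  have hvv : ((skew (γ t)).mulVec w) ⬝ᵥ ((skew (γ t)).mulVec w) ≤ (g ⬝ᵥ g) * (w ⬝ᵥ w) := by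
    rw [aux_lag, hγ t]
    nlinarith [sq_nonneg ((γ t) ⬝ᵥ w)]
  have hTb : T ≤ Real.sqrt 2 * k * (g ⬝ᵥ g) ^ 2 * Real.sqrt (x t ⬝ᵥ x t) := by
    have h2 : (Real.sqrt 2) ^ 2 = 2 := Real.sq_sqrt (by norm_num)
    have hT2 : T ^ 2 ≤ (Real.sqrt 2 * k * (g ⬝ᵥ g) ^ 2 * Real.sqrt (x t ⬝ᵥ x t)) ^ 2 := by
      have hcs := aux_cs g ((skew (γ t)).mulVec w)
      rw [← hT] at hcs
      have hv0 : 0 ≤ ((skew (γ t)).mulVec w) ⬝ᵥ ((skew (γ t)).mulVec w) :=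
        aux_dot_nonneg _
      have step1 : T ^ 2 ≤ (g ⬝ᵥ g) * ((g ⬝ᵥ g) * (w ⬝ᵥ w)) :=
        le_trans hcs (mul_le_mul_of_nonneg_left hvv hG0)
      have step2 : (g ⬝ᵥ g) * ((g ⬝ᵥ g) * (w ⬝ᵥ w)) ≤
          (g ⬝ᵥ g) * ((g ⬝ᵥ g) * (2 * k ^ 2 * (g ⬝ᵥ g) ^ 2 * (x t ⬝ᵥ x t))) := by
        apply mul_le_mul_of_nonneg_left _ hG0
        exact mul_le_mul_of_nonneg_left hww hG0
      calc T ^ 2 ≤ (g ⬝ᵥ g) * ((g ⬝ᵥ g) * (2 * k ^ 2 * (g ⬝ᵥ g) ^ 2 * (x t ⬝ᵥ x t))) :=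
            le_trans step1 step2
        _ = (Real.sqrt 2 * k * (g ⬝ᵥ g) ^ 2 * Real.sqrt (x t ⬝ᵥ x t)) ^ 2 := by
            rw [mul_pow, mul_pow, mul_pow, h2, hX2]
            ring
    have hrhs0 : 0 ≤ Real.sqrt 2 * k * (g ⬝ᵥ g) ^ 2 * Real.sqrt (x t ⬝ᵥ x t) := by positivity
    nlinarith
  -- Cauchy–Schwarz for g ⬝ᵥ γ t
  have hs2 : (g ⬝ᵥ γ t) ^ 2 ≤ (g ⬝ᵥ g) ^ 2 := by
    have h := aux_cs g (γ t)
    rw [hγ t] at h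
    nlinarith
  nlinarith [mul_nonneg hk.le (sq_nonneg ((g ⬝ᵥ g) + (g ⬝ᵥ γ t))),
    mul_nonneg hk.le (sub_nonneg.2 hs2)]
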